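/- (Buyer-Optimal Mechanism / Proposition 1 core.) Let f and g be continuous strictly positive densities on [0,1] with CDFs F and G, and suppose the virtual cost γ(c) = c + F(c)/f(c) is continuous and strictly increasing; let c̄ be the unique solution of γ(c̄) = 1. Define V(q) = ∫_{G⁻¹(1−q)}^1 v g(v) dv, q*(c) = 1 − G(min{γ(c), 1}), and t*(c) = c·q*(c) + ∫_c^1 q*(x) dx. Then the pair (q*, t*) satisfies, for all c, c′ ∈ [0,1], t*(c) − c·q*(c) ≥ t*(c′) − c·q*(c′) and t*(c) − c·q*(c) ≥ 0; and for every pair of measurable functions q : [0,1] → [0,1] and t : [0,1] → ℝ satisfying t(c) − c·q(c) ≥ t(c′) − c·q(c′) for all c, c′ and t(c) − c·q(c) ≥ 0 for all c, it holds that ∫_0^1 (V(q(c)) − t(c)) f(c) dc ≤ ∫_0^1 (V(q*(c)) − t*(c)) f(c) dc. -/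

import Mathlib

open MeasureTheory Set

lemma aux_bddII {φ : ℝ → ℝ} {a b C : ℝ} (hab : a ≤ b)
    (hm : AEStronglyMeasurable φ (volume.restrict (Ioc a b)))
    (hb : ∀ x ∈ Ioc a b, |φ x| ≤ C) : IntervalIntegrable φ volume a b := by
  rw [intervalIntegrable_iff, uIoc_of_le hab]
  refine ⟨hm, ?_⟩
  apply MeasureTheory.HasFiniteIntegral.of_bounded (C := C)
  filter_upwards [ae_restrict_mem measurableSet_Ioc] with x hx
  simpa using hb x hx

lemma aux_envelope (q U : ℝ → ℝ)
    (hq1 : ∀ x ∈ Icc (0:ℝ) 1, q x ≤ 1)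
    (hq0 : ∀ x ∈ Icc (0:ℝ) 1, 0 ≤ q x)
    (hanti : ∀ x ∈ Icc (0:ℝ) 1, ∀ y ∈ Icc (0:ℝ) 1, x ≤ y → q y ≤ q x)
    (hint : ∀ a b : ℝ, 0 ≤ a → b ≤ 1 → IntervalIntegrable q volume a b)
    (hIC : ∀ c ∈ Icc (0:ℝ) 1, ∀ c' ∈ Icc (0:ℝ) 1, U c' + (c' - c) * q c' ≤ U c)
    (hU1 : 0 ≤ U 1) {c : ℝ} (hc : c ∈ Icc (0:ℝ) 1) :
    ∫ x in c..1, q x ≤ U c := by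
  obtain ⟨hc0, hc1⟩ := hc
  have key : ∀ n : ℕ, 0 < n → ∫ x in c..1, q x ≤ U c + (1 - c)/n := by
    intro n hn
    set h : ℝ := (1 - c)/n with hh
    have hnpos : (0:ℝ) < n := by exact_mod_cast hn
    have hhnn : 0 ≤ h := div_nonneg (by linarith) hnpos.le
    set x : ℕ → ℝ := fun i => c + i * h with hx
    have hx0 : x 0 = c := by simp [hx]
    have hxn : x n = 1 := by
      simp only [hx, hh]
      field_simp
      ring
    have hxs : ∀ i, x (i+1) - x i = h := by
      intro i; simp only [hx]; push_cast; ring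
    have hxmono : ∀ i j : ℕ, i ≤ j → x i ≤ x j := by
      intro i j hij
      simp only [hx]
      have : (i:ℝ) ≤ j := by exact_mod_cast hij
      nlinarith
    have hxmem : ∀ i ≤ n, x i ∈ Icc (0:ℝ) 1 := by
      intro i hi
      constructor
      · have := hxmono 0 i (Nat.zero_le i); rw [hx0] at this; linarith
      · have := hxmono i n hi; rw [hxn] at this; linarith
    -- Sum1
    have sum1 : ∑ i ∈ Finset.range n, h * q (x (i+1)) ≤ U c := by
      have : ∑ i ∈ Finset.range n, h * q (x (i+1)) ≤
          ∑ i ∈ Finset.range n, (U (x i) - U (x (i+1))) := by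
        apply Finset.sum_le_sum
        intro i hi
        have hi' : i < n := Finset.mem_range.mp hi
        have h1 := hIC (x i) (hxmem i hi'.le) (x (i+1)) (hxmem (i+1) hi')
        rw [hxs i] at h1
        linarith
      rw [Finset.sum_range_sub' (fun i => U (x i)), hx0, hxn] at this
      linarith
    -- Sum2
    have sum2 : ∫ t in c..1, q t ≤ ∑ i ∈ Finset.range n, h * q (x i) := by
      have hdecomp : ∑ i ∈ Finset.range n, ∫ t in x i..x (i+1), q t = ∫ t in c..1, q t := by
        rw [intervalIntegral.sum_integral_adjacent_intervals]
        · rw [hx0, hxn]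
        · intro k hk
          exact hint _ _ (hxmem k hk.le).1 (hxmem (k+1) hk).2
      rw [← hdecomp]
      apply Finset.sum_le_sum
      intro i hi
      have hi' : i < n := Finset.mem_range.mp hi
      have hle : x i ≤ x (i+1) := hxmono i (i+1) (Nat.le_succ i)
      calc ∫ t in x i..x (i+1), q t ≤ ∫ t in x i..x (i+1), q (x i) := by
            apply intervalIntegral.integral_mono_on hle
              (hint _ _ (hxmem i hi'.le).1 (hxmem (i+1) hi').2) intervalIntegrable_const
            intro t ht
            have htm : t ∈ Icc (0:ℝ) 1 :=
              ⟨le_trans (hxmem i hi'.le).1 ht.1, le_trans ht.2 (hxmem (i+1) hi').2⟩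
            exact hanti (x i) (hxmem i hi'.le) t htm ht.1
        _ = h * q (x i) := by
            rw [intervalIntegral.integral_const, hxs i]; simp [smul_eq_mul]
    -- Sum3: telescoping difference
    have sum3 : ∑ i ∈ Finset.range n, h * q (x i) - ∑ i ∈ Finset.range n, h * q (x (i+1)) ≤ h := by
      rw [← Finset.sum_sub_distrib]
      have : ∑ i ∈ Finset.range n, (h * q (x i) - h * q (x (i+1))) = h * q (x 0) - h * q (x n) :=
        Finset.sum_range_sub' (fun i => h * q (x i)) n
      rw [this, hx0, hxn]
      have h1 := hq1 c ⟨hc0, hc1⟩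
      have h2 := hq0 1 (by norm_num)
      nlinarith
    linarith
  -- conclude
  refine le_of_forall_pos_le_add ?_
  intro ε hε
  obtain ⟨n, hn⟩ := exists_nat_gt (max 1 ((1-c)/ε))
  have hn1 : (1:ℝ) < n := lt_of_le_of_lt (le_max_left _ _) hn
  have hnpos : 0 < n := by
    rcases Nat.eq_zero_or_pos n with h0 | h0
    · subst h0; norm_num at hn1
    · exact h0
  have := key n hnpos
  have hlt : (1-c)/n < ε := by
    rw [div_lt_iff₀ (by positivity)]
    have := lt_of_le_of_lt (le_max_right 1 ((1-c)/ε)) hn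
    rw [div_lt_iff₀ hε] at this
    linarith
  linarith

lemma aux_parts (fc qc : ℝ → ℝ) (Cf : ℝ) (hfc : Continuous fc) (hqc : Measurable qc)
    (hfb : ∀ x, |fc x| ≤ Cf) (hqb : ∀ x, |qc x| ≤ 1) :
    ∫ c in (0:ℝ)..1, (∫ x in c..1, qc x) * fc c
      = ∫ x in (0:ℝ)..1, qc x * (∫ s in (0:ℝ)..x, fc s) := by
  set μ : Measure ℝ := volume.restrict (Ioc (0:ℝ) 1) with hμ
  haveI : IsFiniteMeasure μ := ⟨by
    rw [hμ, Measure.restrict_apply MeasurableSet.univ, Set.univ_inter, Real.volume_Ioc]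
    norm_num⟩
  set Φ : ℝ × ℝ → ℝ := fun p => {p : ℝ × ℝ | p.1 < p.2}.indicator (fun p => fc p.1 * qc p.2) p
    with hΦ
  have hΦmeas : Measurable Φ :=
    Measurable.indicator ((hfc.measurable.comp measurable_fst).mul (hqc.comp measurable_snd))
      (measurableSet_lt measurable_fst measurable_snd)
  have hΦint : Integrable (Function.uncurry (fun c x => Φ (c, x))) (μ.prod μ) := by
    have heq : Function.uncurry (fun c x => Φ (c, x)) = Φ := rfl
    rw [heq]
    refine (integrable_const (max Cf 0)).mono' hΦmeas.aestronglyMeasurable ?_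
    refine Filter.Eventually.of_forall (fun p => ?_)
    simp only [hΦ, Real.norm_eq_abs]
    by_cases h : p ∈ {p : ℝ × ℝ | p.1 < p.2}
    · rw [Set.indicator_of_mem h]
      calc |fc p.1 * qc p.2| = |fc p.1| * |qc p.2| := abs_mul _ _
        _ ≤ Cf * 1 := by
            have h1 := hfb p.1; have h2 := hqb p.2
            have h3 := abs_nonneg (fc p.1); have h4 := abs_nonneg (qc p.2)
            nlinarith
        _ ≤ max Cf 0 := by rw [mul_one]; exact le_max_left _ _
    · rw [Set.indicator_of_notMem h]
      simp [le_max_right]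
  have hswap := MeasureTheory.integral_integral_swap hΦint
  -- LHS identification
  have hqint : ∀ a b : ℝ, IntervalIntegrable qc volume a b := fun a b => by
    apply IntervalIntegrable.mono_fun' (g := fun _ => (1:ℝ)) intervalIntegrable_const
      hqc.aestronglyMeasurable
    exact Filter.Eventually.of_forall (fun x => by simpa using hqb x)
  have hLHS : (∫ c, (∫ x, Φ (c, x) ∂μ) ∂μ) = ∫ c in (0:ℝ)..1, (∫ x in c..1, qc x) * fc c := by
    rw [intervalIntegral.integral_of_le (by norm_num : (0:ℝ) ≤ 1), hμ]
    apply setIntegral_congr_fun measurableSet_Ioc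
    intro c hc
    show (∫ x in Ioc (0:ℝ) 1, Φ (c, x)) = (∫ x in c..1, qc x) * fc c
    have h1 : (fun x => Φ (c, x)) = (Ioi c).indicator (fun x => fc c * qc x) := by
      funext x
      simp only [hΦ, Set.indicator]
      rfl
    rw [h1, integral_indicator measurableSet_Ioi]
    have h2 : Ioc (0:ℝ) 1 ∩ Ioi c = Ioc c 1 := by
      ext x
      simp only [mem_inter_iff, mem_Ioc, mem_Ioi]
      constructor
      · rintro ⟨⟨_, hx1⟩, hcx⟩; exact ⟨hcx, hx1⟩
      · rintro ⟨hcx, hx1⟩; exact ⟨⟨hc.1.trans hcx, hx1⟩, hcx⟩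
    rw [Measure.restrict_restrict measurableSet_Ioi, Set.inter_comm, h2,
      MeasureTheory.integral_const_mul, ← intervalIntegral.integral_of_le hc.2]
    ring
  -- RHS identification
  have hRHS : (∫ x, (∫ c, Φ (c, x) ∂μ) ∂μ) = ∫ x in (0:ℝ)..1, qc x * (∫ s in (0:ℝ)..x, fc s) := by
    rw [intervalIntegral.integral_of_le (by norm_num : (0:ℝ) ≤ 1), hμ]
    apply setIntegral_congr_fun measurableSet_Ioc
    intro x hx
    show (∫ c in Ioc (0:ℝ) 1, Φ (c, x)) = qc x * ∫ s in (0:ℝ)..x, fc s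
    have h1 : (fun c => Φ (c, x)) = (Iio x).indicator (fun c => fc c * qc x) := by
      funext c
      simp only [hΦ, Set.indicator]
      rfl
    rw [h1, integral_indicator measurableSet_Iio]
    have h2 : Ioc (0:ℝ) 1 ∩ Iio x = Ioo 0 x := by
      ext c
      simp only [mem_inter_iff, mem_Ioc, mem_Ioo, mem_Iio]
      constructor
      · rintro ⟨⟨hc0, _⟩, hcx⟩; exact ⟨hc0, hcx⟩
      · rintro ⟨hc0, hcx⟩; exact ⟨⟨hc0, hcx.le.trans hx.2⟩, hcx⟩
    rw [Measure.restrict_restrict measurableSet_Iio, Set.inter_comm, h2,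
      intervalIntegral.integral_of_le (hx.1.le), integral_Ioc_eq_integral_Ioo,
      ← MeasureTheory.integral_const_mul]
    apply setIntegral_congr_fun measurableSet_Ioo
    intro c _
    ring
  rw [← hLHS, ← hRHS, hswap]

noncomputable def clamp01 (y : ℝ) : ℝ := max 0 (min y 1)

lemma clamp01_cont : Continuous clamp01 :=
  continuous_const.max (continuous_id.min continuous_const)

lemma clamp01_mem (y : ℝ) : clamp01 y ∈ Icc (0:ℝ) 1 :=
  ⟨le_max_left _ _, max_le (by norm_num) (min_le_right _ _)⟩

lemma clamp01_eq {y : ℝ} (hy : y ∈ Icc (0:ℝ) 1) : clamp01 y = y := by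
  simp only [clamp01, min_eq_left hy.2, max_eq_right hy.1]

theorem stmt_7
    (f g F G Ginv γ : ℝ → ℝ) (cbar : ℝ)
    (hf_cont : ContinuousOn f (Icc 0 1))
    (hf_pos : ∀ x ∈ Icc (0:ℝ) 1, 0 < f x)
    (hf_mass : ∫ x in (0:ℝ)..1, f x = 1)
    (hg_cont : ContinuousOn g (Icc 0 1))
    (hg_pos : ∀ x ∈ Icc (0:ℝ) 1, 0 < g x)
    (hg_mass : ∫ x in (0:ℝ)..1, g x = 1)
    (hF : ∀ x, F x = ∫ s in (0:ℝ)..x, f s)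
    (hG : ∀ x, G x = ∫ s in (0:ℝ)..x, g s)
    (hγ : ∀ c ∈ Icc (0:ℝ) 1, γ c = c + F c / f c)
    (hγ_cont : ContinuousOn γ (Icc 0 1))
    (hγ_mono : StrictMonoOn γ (Icc 0 1))
    (hcbar : cbar ∈ Icc (0:ℝ) 1) (hγcbar : γ cbar = 1)
    (hGinv_mem : ∀ p ∈ Icc (0:ℝ) 1, Ginv p ∈ Icc (0:ℝ) 1)
    (hGinv : ∀ p ∈ Icc (0:ℝ) 1, G (Ginv p) = p)
    (V qstar tstar : ℝ → ℝ)
    (hV : ∀ q ∈ Icc (0:ℝ) 1, V q = ∫ v in (Ginv (1 - q))..1, v * g v)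
    (hqstar : ∀ c, qstar c = 1 - G (min (γ c) 1))
    (htstar : ∀ c, tstar c = c * qstar c + ∫ x in c..1, qstar x) :
    (∀ c ∈ Icc (0:ℝ) 1, ∀ c' ∈ Icc (0:ℝ) 1,
        tstar c' - c * qstar c' ≤ tstar c - c * qstar c) ∧
    (∀ c ∈ Icc (0:ℝ) 1, 0 ≤ tstar c - c * qstar c) ∧
    (∀ q t : ℝ → ℝ, Measurable q → Measurable t →
      (∀ c ∈ Icc (0:ℝ) 1, q c ∈ Icc (0:ℝ) 1) →
      (∀ c ∈ Icc (0:ℝ) 1, ∀ c' ∈ Icc (0:ℝ) 1, t c' - c * q c' ≤ t c - c * q c) →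
      (∀ c ∈ Icc (0:ℝ) 1, 0 ≤ t c - c * q c) →
      (∫ c in (0:ℝ)..1, (V (q c) - t c) * f c) ≤
        ∫ c in (0:ℝ)..1, (V (qstar c) - tstar c) * f c) := by
  -- ====== basic facts ======
  have hg_int : ∀ a b : ℝ, a ∈ Icc (0:ℝ) 1 → b ∈ Icc (0:ℝ) 1 → IntervalIntegrable g volume a b := by
    intro a b ha hb
    apply (hg_cont.mono ?_).intervalIntegrable
    intro x hx
    rw [mem_uIcc] at hx
    constructor
    · rcases hx with h | h
      · exact le_trans ha.1 h.1
      · exact le_trans hb.1 h.1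
    · rcases hx with h | h
      · exact le_trans h.2 hb.2
      · exact le_trans h.2 ha.2
  
  have hf_int : ∀ a b : ℝ, a ∈ Icc (0:ℝ) 1 → b ∈ Icc (0:ℝ) 1 → IntervalIntegrable f volume a b := by
    intro a b ha hb
    apply (hf_cont.mono ?_).intervalIntegrable
    intro x hx
    rw [mem_uIcc] at hx
    constructor
    · rcases hx with h | h
      · exact le_trans ha.1 h.1
      · exact le_trans hb.1 h.1
    · rcases hx with h | h
      · exact le_trans h.2 hb.2
      · exact le_trans h.2 ha.2
  have hGdiff : ∀ a ∈ Icc (0:ℝ) 1, ∀ b ∈ Icc (0:ℝ) 1, G b - G a = ∫ s in a..b, g s := by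
    intro a ha b hb
    rw [hG a, hG b, ← intervalIntegral.integral_add_adjacent_intervals
      (hg_int 0 a (by norm_num) ha) (hg_int a b ha hb)]
    ring
  have hFdiff : ∀ a ∈ Icc (0:ℝ) 1, ∀ b ∈ Icc (0:ℝ) 1, F b - F a = ∫ s in a..b, f s := by
    intro a ha b hb
    rw [hF a, hF b, ← intervalIntegral.integral_add_adjacent_intervals
      (hf_int 0 a (by norm_num) ha) (hf_int a b ha hb)]
    ring
  have hG0 : G 0 = 0 := by rw [hG]; simp
  have hG1 : G 1 = 1 := by rw [hG]; exact hg_mass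
  have hF0 : F 0 = 0 := by rw [hF]; simp
  have hGmono : ∀ a ∈ Icc (0:ℝ) 1, ∀ b ∈ Icc (0:ℝ) 1, a ≤ b → G a ≤ G b := by
    intro a ha b hb hab
    have h := hGdiff a ha b hb
    have : 0 ≤ ∫ s in a..b, g s := by
      apply intervalIntegral.integral_nonneg hab
      intro u hu
      exact (hg_pos u ⟨le_trans ha.1 hu.1, le_trans hu.2 hb.2⟩).le
    linarith
  have hGstrict : ∀ a ∈ Icc (0:ℝ) 1, ∀ b ∈ Icc (0:ℝ) 1, a < b → G a < G b := by
    intro a ha b hb hab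
    have h := hGdiff a ha b hb
    have hsub : Icc a b ⊆ Icc (0:ℝ) 1 := Icc_subset_Icc ha.1 hb.2
    have : 0 < ∫ s in a..b, g s := by
      apply intervalIntegral.intervalIntegral_pos_of_pos_on (hg_int a b ha hb)
      · intro u hu
        exact hg_pos u ⟨le_trans ha.1 hu.1.le, le_trans hu.2.le hb.2⟩
      · exact hab
    linarith
  have hGmem : ∀ a ∈ Icc (0:ℝ) 1, G a ∈ Icc (0:ℝ) 1 := by
    intro a ha
    constructor
    · have := hGmono 0 (by norm_num) a ha ha.1; linarith [hG0]
    · have := hGmono a ha 1 (by norm_num) ha.2; linarith [hG1]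
  have hFmem : ∀ a ∈ Icc (0:ℝ) 1, 0 ≤ F a := by
    intro a ha
    have := hFdiff 0 (by norm_num) a ha
    rw [hF0] at this
    have h2 : 0 ≤ ∫ s in (0:ℝ)..a, f s := by
      apply intervalIntegral.integral_nonneg ha.1
      intro u hu
      exact (hf_pos u ⟨hu.1, le_trans hu.2 ha.2⟩).le
    linarith
  have hγ_ge : ∀ c ∈ Icc (0:ℝ) 1, c ≤ γ c := by
    intro c hc
    rw [hγ c hc]
    have h1 := hFmem c hc
    have h2 := hf_pos c hc
    have := div_nonneg h1 h2.le
    linarith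
  have hmmem : ∀ c ∈ Icc (0:ℝ) 1, min (γ c) 1 ∈ Icc (0:ℝ) 1 := by
    intro c hc
    exact ⟨le_min (le_trans hc.1 (hγ_ge c hc)) (by norm_num), min_le_right _ _⟩
  have hq01 : ∀ c ∈ Icc (0:ℝ) 1, qstar c ∈ Icc (0:ℝ) 1 := by
    intro c hc
    rw [hqstar c]
    have := hGmem _ (hmmem c hc)
    constructor <;> [linarith [this.2]; linarith [this.1]]
  have hqanti : ∀ x ∈ Icc (0:ℝ) 1, ∀ y ∈ Icc (0:ℝ) 1, x ≤ y → qstar y ≤ qstar x := by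
    intro x hx y hy hxy
    rw [hqstar x, hqstar y]
    have hγle : γ x ≤ γ y := by
      rcases eq_or_lt_of_le hxy with h | h
      · rw [h]
      · exact (hγ_mono hx hy h).le
    have := hGmono _ (hmmem x hx) _ (hmmem y hy) (min_le_min hγle (le_refl 1))
    linarith
  have hqstar_int : ∀ a b : ℝ, a ∈ Icc (0:ℝ) 1 → b ∈ Icc (0:ℝ) 1 → a ≤ b →
      IntervalIntegrable qstar volume a b := by
    intro a b ha hb hab
    apply AntitoneOn.intervalIntegrable
    intro u hu v hv huv
    rw [uIcc_of_le hab] at hu hv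
    exact hqanti u ⟨le_trans ha.1 hu.1, le_trans hu.2 hb.2⟩ v ⟨le_trans ha.1 hv.1, le_trans hv.2 hb.2⟩ huv
  -- ====== Part 1 : IC ======
  have part1 : ∀ c ∈ Icc (0:ℝ) 1, ∀ c' ∈ Icc (0:ℝ) 1,
      tstar c' - c * qstar c' ≤ tstar c - c * qstar c := by
    intro c hc c' hc'
    rw [htstar c, htstar c']
    have hsplit : (∫ x in c..1, qstar x) = (∫ x in c..c', qstar x) + ∫ x in c'..1, qstar x := by
      rw [intervalIntegral.integral_add_adjacent_intervals]
      · rcases le_total c c' with h | h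
        · exact hqstar_int c c' hc hc' h
        · exact (hqstar_int c' c hc' hc h).symm
      · exact hqstar_int c' 1 hc' (by norm_num) hc'.2
    rw [hsplit]
    have key : (c' - c) * qstar c' ≤ ∫ x in c..c', qstar x := by
      rcases le_total c c' with h | h
      · calc (c' - c) * qstar c' = ∫ _x in c..c', qstar c' := by
              rw [intervalIntegral.integral_const, smul_eq_mul]
          _ ≤ ∫ x in c..c', qstar x := by
              apply intervalIntegral.integral_mono_on h intervalIntegrable_const
                (hqstar_int c c' hc hc' h)
              intro u hu
              exact hqanti u ⟨le_trans hc.1 hu.1, le_trans hu.2 hc'.2⟩ c' hc' hu.2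
      · have h1 : (∫ x in c'..c, qstar x) ≤ (c - c') * qstar c' := by
          calc (∫ x in c'..c, qstar x) ≤ ∫ _x in c'..c, qstar c' := by
                apply intervalIntegral.integral_mono_on h (hqstar_int c' c hc' hc h)
                  intervalIntegrable_const
                intro u hu
                exact hqanti c' hc' u ⟨le_trans hc'.1 hu.1, le_trans hu.2 hc.2⟩ hu.1
            _ = (c - c') * qstar c' := by
                rw [intervalIntegral.integral_const, smul_eq_mul]
        have h2 : (∫ x in c..c', qstar x) = -∫ x in c'..c, qstar x :=
          intervalIntegral.integral_symm c' c
        rw [h2]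
        linarith
    linarith
  -- ====== Part 2 : IR ======
  have part2 : ∀ c ∈ Icc (0:ℝ) 1, 0 ≤ tstar c - c * qstar c := by
    intro c hc
    rw [htstar c]
    have : 0 ≤ ∫ x in c..1, qstar x := by
      apply intervalIntegral.integral_nonneg hc.2
      intro u hu
      exact (hq01 u ⟨le_trans hc.1 hu.1, hu.2⟩).1
    linarith
  refine ⟨part1, part2, ?_⟩
  
  -- ====== Part 3 ======
  intro q t hqmeas htmeas hq01' hICq hIRq
  -- clamped versions of f, γ, g and primitives
  set fc : ℝ → ℝ := fun y => f (clamp01 y) with hfc_def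
  have hfc_cont : Continuous fc := hf_cont.comp_continuous clamp01_cont clamp01_mem
  obtain ⟨Cf, hCf0⟩ := isCompact_Icc.exists_bound_of_continuousOn hf_cont
  have hCf : ∀ x, |fc x| ≤ Cf := fun x => hCf0 _ (clamp01_mem x)
  have hfc_eq : ∀ c ∈ Icc (0:ℝ) 1, fc c = f c := fun c hc => by
    simp only [hfc_def, clamp01_eq hc]
  have hfc_nonneg : ∀ c ∈ Icc (0:ℝ) 1, 0 ≤ fc c := fun c hc => by
    rw [hfc_eq c hc]; exact (hf_pos c hc).le
  set γc : ℝ → ℝ := fun y => γ (clamp01 y) with hγc_def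
  have hγc_cont : Continuous γc := hγ_cont.comp_continuous clamp01_cont clamp01_mem
  obtain ⟨Cγ, hCγ0⟩ := isCompact_Icc.exists_bound_of_continuousOn hγ_cont
  have hCγ : ∀ x, |γc x| ≤ Cγ := fun x => hCγ0 _ (clamp01_mem x)
  have hγc_eq : ∀ c ∈ Icc (0:ℝ) 1, γc c = γ c := fun c hc => by
    simp only [hγc_def, clamp01_eq hc]
  set gc : ℝ → ℝ := fun y => g (clamp01 y) with hgc_def
  have hgc_cont : Continuous gc := hg_cont.comp_continuous clamp01_cont clamp01_mem
  set Gc : ℝ → ℝ := fun x => ∫ s in (0:ℝ)..x, gc s with hGc_def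
  have hGc_cont : Continuous Gc :=
    intervalIntegral.continuous_primitive (fun a b => hgc_cont.intervalIntegrable a b) 0
  have hGc_eq : ∀ x ∈ Icc (0:ℝ) 1, Gc x = G x := by
    intro x hx
    rw [hGc_def, hG x]
    apply intervalIntegral.integral_congr
    intro s hs
    rw [uIcc_of_le hx.1] at hs
    simp only [hgc_def, clamp01_eq ⟨hs.1, le_trans hs.2 hx.2⟩]
  set qsg : ℝ → ℝ := fun c => 1 - Gc (min (γc c) 1) with hqsg_def
  have hqsg_cont : Continuous qsg :=
    continuous_const.sub (hGc_cont.comp (hγc_cont.min continuous_const))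
  have hqsg_eq : ∀ c ∈ Icc (0:ℝ) 1, qsg c = qstar c := by
    intro c hc
    rw [hqsg_def, hqstar c]
    simp only [hγc_eq c hc]
    rw [hGc_eq _ (hmmem c hc)]
  have hqsg_mem : ∀ x, qsg x ∈ Icc (0:ℝ) 1 := by
    intro x
    have h1 : qsg x = qsg (clamp01 x) := by
      simp only [hqsg_def, hγc_def, clamp01_eq (clamp01_mem x)]
    rw [h1, hqsg_eq _ (clamp01_mem x)]
    exact hq01 _ (clamp01_mem x)
  -- clamped q
  set qg : ℝ → ℝ := fun x => clamp01 (q x) with hqg_def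
  have hqg_meas : Measurable qg := clamp01_cont.measurable.comp hqmeas
  have hqg_mem : ∀ x, qg x ∈ Icc (0:ℝ) 1 := fun x => clamp01_mem _
  have hqg_eq : ∀ c ∈ Icc (0:ℝ) 1, qg c = q c := fun c hc => clamp01_eq (hq01' c hc)
  -- V facts
  have hvg_int : ∀ a ∈ Icc (0:ℝ) 1, ∀ b ∈ Icc (0:ℝ) 1,
      IntervalIntegrable (fun v => v * g v) volume a b := by
    intro a ha b hb
    apply ((continuousOn_id.mul hg_cont).mono ?_).intervalIntegrable
    intro x hx
    rw [mem_uIcc] at hx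
    constructor
    · rcases hx with h | h
      · exact le_trans ha.1 h.1
      · exact le_trans hb.1 h.1
    · rcases hx with h | h
      · exact le_trans h.2 hb.2
      · exact le_trans h.2 ha.2
  have hinvmem : ∀ p ∈ Icc (0:ℝ) 1, Ginv (1 - p) ∈ Icc (0:ℝ) 1 := fun p hp =>
    hGinv_mem _ ⟨by linarith [hp.2], by linarith [hp.1]⟩
  have hVdiff : ∀ p1 ∈ Icc (0:ℝ) 1, ∀ p2 ∈ Icc (0:ℝ) 1,
      V p1 - V p2 = ∫ v in (Ginv (1 - p1))..(Ginv (1 - p2)), v * g v := by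
    intro p1 h1 p2 h2
    have ha1 := hinvmem p1 h1
    have ha2 := hinvmem p2 h2
    rw [hV p1 h1, hV p2 h2,
      ← intervalIntegral.integral_add_adjacent_intervals
        (hvg_int _ ha1 _ ha2) (hvg_int _ ha2 _ (by norm_num))]
    ring
  have hVmono : ∀ p1 ∈ Icc (0:ℝ) 1, ∀ p2 ∈ Icc (0:ℝ) 1, p2 ≤ p1 →
      0 ≤ V p1 - V p2 ∧ V p1 - V p2 ≤ p1 - p2 := by
    intro p1 h1 p2 h2 h21
    have ha1 := hinvmem p1 h1
    have ha2 := hinvmem p2 h2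
    have hp1' : (1:ℝ) - p1 ∈ Icc (0:ℝ) 1 := ⟨by linarith [h1.2], by linarith [h1.1]⟩
    have hp2' : (1:ℝ) - p2 ∈ Icc (0:ℝ) 1 := ⟨by linarith [h2.2], by linarith [h2.1]⟩
    have haa : Ginv (1 - p1) ≤ Ginv (1 - p2) := by
      by_contra hcon
      push_neg at hcon
      have := hGstrict _ ha2 _ ha1 hcon
      rw [hGinv (1 - p2) hp2', hGinv (1 - p1) hp1'] at this
      linarith
    have hmemsub : ∀ u ∈ Icc (Ginv (1-p1)) (Ginv (1-p2)), u ∈ Icc (0:ℝ) 1 := fun u hu =>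
      ⟨le_trans ha1.1 hu.1, le_trans hu.2 ha2.2⟩
    rw [hVdiff p1 h1 p2 h2]
    constructor
    · apply intervalIntegral.integral_nonneg haa
      intro u hu
      have hu1 := hmemsub u hu
      exact mul_nonneg hu1.1 (hg_pos u hu1).le
    · have hdg : p1 - p2 = ∫ v in (Ginv (1-p1))..(Ginv (1-p2)), g v := by
        have := hGdiff _ ha1 _ ha2
        rw [hGinv (1 - p1) hp1', hGinv (1 - p2) hp2'] at this
        linarith
      rw [hdg]
      apply intervalIntegral.integral_mono_on haa (hvg_int _ ha1 _ ha2) (hg_int _ _ ha1 ha2)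
      intro u hu
      have hu1 := hmemsub u hu
      nlinarith [hg_pos u hu1, hu1.2]
  have hVlip : ∀ p1 ∈ Icc (0:ℝ) 1, ∀ p2 ∈ Icc (0:ℝ) 1, |V p1 - V p2| ≤ |p1 - p2| := by
    intro p1 h1 p2 h2
    rcases le_total p2 p1 with h | h
    · obtain ⟨hA, hB⟩ := hVmono p1 h1 p2 h2 h
      rw [abs_of_nonneg hA, abs_of_nonneg (by linarith : (0:ℝ) ≤ p1 - p2)]
      exact hB
    · obtain ⟨hA, hB⟩ := hVmono p2 h2 p1 h1 h
      rw [abs_sub_comm, abs_sub_comm p1 p2, abs_of_nonneg hA,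
        abs_of_nonneg (by linarith : (0:ℝ) ≤ p2 - p1)]
      exact hB
  have hV_contOn : ContinuousOn V (Icc (0:ℝ) 1) := by
    apply LipschitzOnWith.continuousOn (K := 1)
    apply LipschitzOnWith.of_dist_le_mul
    intro x hx y hy
    rw [Real.dist_eq, Real.dist_eq]
    simpa using hVlip x hx y hy
  set Vc : ℝ → ℝ := fun y => V (clamp01 y) with hVc_def
  have hVc_cont : Continuous Vc := hV_contOn.comp_continuous clamp01_cont clamp01_mem
  have hVc_eq : ∀ y ∈ Icc (0:ℝ) 1, Vc y = V y := fun y hy => by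
    simp only [hVc_def, clamp01_eq hy]
  have hVbd : ∀ y ∈ Icc (0:ℝ) 1, |V y| ≤ 1 := by
    intro y hy
    have ha := hinvmem y hy
    rw [hV y hy]
    have h1 : 0 ≤ ∫ v in (Ginv (1-y))..1, v * g v := by
      apply intervalIntegral.integral_nonneg ha.2
      intro u hu
      have hu1 : u ∈ Icc (0:ℝ) 1 := ⟨le_trans ha.1 hu.1, hu.2⟩
      exact mul_nonneg hu1.1 (hg_pos u hu1).le
    have h2 : (∫ v in (Ginv (1-y))..1, v * g v) ≤ ∫ v in (Ginv (1-y))..1, g v := by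
      apply intervalIntegral.integral_mono_on ha.2 (hvg_int _ ha _ (by norm_num))
        (hg_int _ _ ha (by norm_num))
      intro u hu
      have hu1 : u ∈ Icc (0:ℝ) 1 := ⟨le_trans ha.1 hu.1, hu.2⟩
      nlinarith [hg_pos u hu1, hu1.2]
    have h3 : (∫ v in (Ginv (1-y))..1, g v) = G 1 - G (Ginv (1-y)) :=
      (hGdiff _ ha _ (by norm_num)).symm
    have h4 := (hGmem _ ha).1
    rw [abs_of_nonneg h1]
    rw [h3, hG1] at h2
    linarith
  have hVc_bd : ∀ y, |Vc y| ≤ 1 := fun y => hVbd _ (clamp01_mem y)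
  -- pointwise maximization
  have hPW : ∀ c ∈ Icc (0:ℝ) 1, ∀ p ∈ Icc (0:ℝ) 1,
      V p - γ c * p ≤ V (qstar c) - γ c * qstar c := by
    intro c hc p hp
    have hmI : min (γ c) 1 ∈ Icc (0:ℝ) 1 := hmmem c hc
    have hmγ : min (γ c) 1 ≤ γ c := min_le_left _ _
    have ha : Ginv (1-p) ∈ Icc (0:ℝ) 1 := hinvmem p hp
    have hp' : (1:ℝ) - p ∈ Icc (0:ℝ) 1 := ⟨by linarith [hp.2], by linarith [hp.1]⟩
    have hGa : G (Ginv (1-p)) = 1 - p := hGinv _ hp'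
    have hqsc : qstar c = 1 - G (min (γ c) 1) := hqstar c
    have hGmI : G (min (γ c) 1) ∈ Icc (0:ℝ) 1 := hGmem _ hmI
    have hastar : Ginv (1 - qstar c) = min (γ c) 1 := by
      have h0 : 1 - qstar c = G (min (γ c) 1) := by rw [hqsc]; ring
      rw [h0]
      have h1 : G (Ginv (G (min (γ c) 1))) = G (min (γ c) 1) := hGinv _ hGmI
      have h2 : Ginv (G (min (γ c) 1)) ∈ Icc (0:ℝ) 1 := hGinv_mem _ hGmI
      by_contra hne
      rcases lt_or_gt_of_ne hne with h | h
      · exact absurd h1 (ne_of_lt (hGstrict _ h2 _ hmI h))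
      · exact absurd h1 (ne_of_gt (hGstrict _ hmI _ h2 h))
    have hVp : V p = ∫ v in (Ginv (1-p))..1, v * g v := hV p hp
    have hVq : V (qstar c) = ∫ v in (min (γ c) 1)..1, v * g v := by
      rw [hV _ (hq01 c hc), hastar]
    have hsplit : (∫ v in (Ginv (1-p))..1, v * g v)
        = (∫ v in (Ginv (1-p))..(min (γ c) 1), v * g v) + ∫ v in (min (γ c) 1)..1, v * g v :=
      (intervalIntegral.integral_add_adjacent_intervals
        (hvg_int _ ha _ hmI) (hvg_int _ hmI _ (by norm_num))).symm
    have hgsplit : p - qstar c = ∫ v in (Ginv (1-p))..(min (γ c) 1), g v := by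
      have hd := hGdiff _ ha _ hmI
      rw [hGa] at hd
      rw [hqsc]
      linarith
    suffices h : (∫ v in (Ginv (1-p))..(min (γ c) 1), v * g v)
        ≤ γ c * ∫ v in (Ginv (1-p))..(min (γ c) 1), g v by
      rw [← hgsplit] at h
      have hms := mul_sub (γ c) p (qstar c)
      rw [hVp, hVq, hsplit]
      linarith
    have hconst_int : ∀ a ∈ Icc (0:ℝ) 1, ∀ b ∈ Icc (0:ℝ) 1,
        IntervalIntegrable (fun v => γ c * g v) volume a b := fun a ha' b hb' =>
      (hg_int a b ha' hb').const_mul (γ c)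
    rcases le_total (Ginv (1-p)) (min (γ c) 1) with ham | ham
    · have h1 : 0 ≤ ∫ v in (Ginv (1-p))..(min (γ c) 1), (γ c * g v - v * g v) := by
        apply intervalIntegral.integral_nonneg ham
        intro u hu
        have hu1 : u ∈ Icc (0:ℝ) 1 := ⟨le_trans ha.1 hu.1, le_trans hu.2 hmI.2⟩
        have := (hg_pos u hu1).le
        nlinarith [hu.2]
      have h2 : (∫ v in (Ginv (1-p))..(min (γ c) 1), (γ c * g v - v * g v))
          = γ c * (∫ v in (Ginv (1-p))..(min (γ c) 1), g v)
            - ∫ v in (Ginv (1-p))..(min (γ c) 1), v * g v := by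
        rw [intervalIntegral.integral_sub (hconst_int _ ha _ hmI) (hvg_int _ ha _ hmI),
          intervalIntegral.integral_const_mul]
      linarith
    · rcases eq_or_lt_of_le ham with heq | hlt
      · rw [heq]
        simp
      · have hmγc : min (γ c) 1 = γ c := by
          rcases le_total (γ c) 1 with h | h
          · exact min_eq_left h
          · exfalso
            have : min (γ c) 1 = 1 := min_eq_right h
            rw [this] at hlt
            linarith [ha.2]
        have h1 : 0 ≤ ∫ v in (min (γ c) 1)..(Ginv (1-p)), (v * g v - γ c * g v) := by
          apply intervalIntegral.integral_nonneg ham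
          intro u hu
          have hu1 : u ∈ Icc (0:ℝ) 1 := ⟨le_trans hmI.1 hu.1, le_trans hu.2 ha.2⟩
          have := (hg_pos u hu1).le
          rw [hmγc] at hu
          nlinarith [hu.1]
        have h2 : (∫ v in (min (γ c) 1)..(Ginv (1-p)), (v * g v - γ c * g v))
            = (∫ v in (min (γ c) 1)..(Ginv (1-p)), v * g v)
              - γ c * ∫ v in (min (γ c) 1)..(Ginv (1-p)), g v := by
          rw [intervalIntegral.integral_sub (hvg_int _ hmI _ ha) (hconst_int _ hmI _ ha),
            intervalIntegral.integral_const_mul]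
        have h3 : (∫ v in (Ginv (1-p))..(min (γ c) 1), v * g v)
            = -∫ v in (min (γ c) 1)..(Ginv (1-p)), v * g v :=
          intervalIntegral.integral_symm _ _
        have h4 : (∫ v in (Ginv (1-p))..(min (γ c) 1), g v)
            = -∫ v in (min (γ c) 1)..(Ginv (1-p)), g v :=
          intervalIntegral.integral_symm _ _
        rw [h3, h4]
        linarith
  
  -- monotonicity of q from IC
  have hq_anti : ∀ x ∈ Icc (0:ℝ) 1, ∀ y ∈ Icc (0:ℝ) 1, x ≤ y → q y ≤ q x := by
    intro x hx y hy hxy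
    rcases eq_or_lt_of_le hxy with h | h
    · rw [h]
    · have h1 := hICq x hx y hy
      have h2 := hICq y hy x hx
      nlinarith
  have hQint : ∀ Q : ℝ → ℝ, Measurable Q → (∀ x, Q x ∈ Icc (0:ℝ) 1) →
      ∀ a b : ℝ, IntervalIntegrable Q volume a b := by
    intro Q hQm hQmem a b
    apply IntervalIntegrable.mono_fun' (g := fun _ => (1:ℝ)) intervalIntegrable_const
      hQm.aestronglyMeasurable.restrict
    refine Filter.Eventually.of_forall fun x => ?_
    show ‖Q x‖ ≤ 1
    rw [Real.norm_eq_abs, abs_of_nonneg (hQmem x).1]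
    exact (hQmem x).2
  -- envelope bound for (q, t)
  have henv : ∀ c ∈ Icc (0:ℝ) 1, (∫ x in c..1, qg x) ≤ t c - c * q c := by
    intro c hc
    apply aux_envelope qg (fun c => t c - c * q c)
      (fun x _ => (hqg_mem x).2) (fun x _ => (hqg_mem x).1)
      (fun x hx y hy hxy => by rw [hqg_eq x hx, hqg_eq y hy]; exact hq_anti x hx y hy hxy)
      (fun a b _ _ => hQint qg hqg_meas hqg_mem a b)
      ?_ ?_ hc
    · intro c1 hc1 c2 hc2
      rw [hqg_eq c2 hc2]
      have h1 := hICq c1 hc1 c2 hc2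
      have h2 : t c2 - c2 * q c2 + (c2 - c1) * q c2 = t c2 - c1 * q c2 := by ring
      linarith
    · simpa using hIRq 1 (by norm_num)
  have ht0 : ∀ c ∈ Icc (0:ℝ) 1, 0 ≤ t c ∧ t c ≤ t 0 := by
    intro c hc
    have h1 := hIRq c hc
    have h2 := hICq 0 (by norm_num) c hc
    have h3 := (hq01' c hc).1
    have h4 : 0 ≤ c * q c := mul_nonneg hc.1 h3
    rw [zero_mul, zero_mul] at h2
    exact ⟨by linarith, by linarith⟩
  have htbd : ∀ c ∈ Icc (0:ℝ) 1, |t c| ≤ |t 0| := by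
    intro c hc
    obtain ⟨h1, h2⟩ := ht0 c hc
    rw [abs_of_nonneg h1]
    exact le_trans h2 (le_abs_self _)
  have habs2 : ∀ a b A B : ℝ, |a| ≤ A → |b| ≤ B → |a * b| ≤ A * B := by
    intro a b A B h1 h2
    rw [abs_mul]
    nlinarith [abs_nonneg a, abs_nonneg b]
  -- integrability + key transfer equality, for any measurable [0,1]-valued Q
  have pack : ∀ Q : ℝ → ℝ, Measurable Q → (∀ x, Q x ∈ Icc (0:ℝ) 1) →
      IntervalIntegrable (fun c => (Vc (Q c) - (c * Q c + ∫ x in c..1, Q x)) * fc c) volume 0 1 ∧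
      IntervalIntegrable (fun c => (Vc (Q c) - γc c * Q c) * fc c) volume 0 1 ∧
      (∫ c in (0:ℝ)..1, (Vc (Q c) - (c * Q c + ∫ x in c..1, Q x)) * fc c)
        = ∫ c in (0:ℝ)..1, (Vc (Q c) - γc c * Q c) * fc c := by
    intro Q hQm hQmem
    have hQi := hQint Q hQm hQmem
    have habs : ∀ x, |Q x| ≤ 1 := fun x => by
      rw [abs_of_nonneg (hQmem x).1]; exact (hQmem x).2
    set R : ℝ → ℝ := fun c => ∫ x in c..1, Q x with hRdef
    have hRcont : Continuous R := by
      have h1 : Continuous fun c => ∫ x in (1:ℝ)..c, Q x :=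
        intervalIntegral.continuous_primitive hQi 1
      have h2 : R = fun c => -∫ x in (1:ℝ)..c, Q x := by
        funext c
        exact intervalIntegral.integral_symm 1 c
      rw [h2]; exact h1.neg
    have hRbd : ∀ c ∈ Ioc (0:ℝ) 1, |R c| ≤ 1 := by
      intro c hc
      have h1 : |R c| ≤ ∫ x in c..1, |Q x| := intervalIntegral.abs_integral_le_integral_abs hc.2
      have h2 : (∫ x in c..1, |Q x|) ≤ ∫ _x in c..1, (1:ℝ) := by
        apply intervalIntegral.integral_mono_on hc.2 (hQi c 1).abs intervalIntegrable_const
        intro x _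
        rw [abs_of_nonneg (hQmem x).1]; exact (hQmem x).2
      rw [intervalIntegral.integral_const, smul_eq_mul, mul_one] at h2
      linarith [hc.1]
    have hm1 : Measurable fun c => Vc (Q c) * fc c :=
      (hVc_cont.measurable.comp hQm).mul hfc_cont.measurable
    have hm2 : Measurable fun c => (c * Q c) * fc c :=
      ((measurable_id.mul hQm).mul hfc_cont.measurable)
    have hm3 : Measurable fun c => R c * fc c := hRcont.measurable.mul hfc_cont.measurable
    have hm4 : Measurable fun c => ((γc c - c) * Q c) * fc c :=
      (((hγc_cont.measurable.sub measurable_id).mul hQm).mul hfc_cont.measurable)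
    have hm5 : Measurable fun c => (γc c * Q c) * fc c :=
      ((hγc_cont.measurable.mul hQm).mul hfc_cont.measurable)
    have i1 : IntervalIntegrable (fun c => Vc (Q c) * fc c) volume 0 1 := by
      apply aux_bddII (C := 1 * Cf) (by norm_num) hm1.aestronglyMeasurable.restrict
      intro x _
      exact habs2 _ _ 1 Cf (hVc_bd _) (hCf x)
    have i2 : IntervalIntegrable (fun c => (c * Q c) * fc c) volume 0 1 := by
      apply aux_bddII (C := (1*1) * Cf) (by norm_num) hm2.aestronglyMeasurable.restrict
      intro x hx
      have hxb : |x| ≤ 1 := by rw [abs_of_nonneg hx.1.le]; exact hx.2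
      exact habs2 _ _ (1*1) Cf (habs2 _ _ 1 1 hxb (habs x)) (hCf x)
    have i3 : IntervalIntegrable (fun c => R c * fc c) volume 0 1 := by
      apply aux_bddII (C := 1 * Cf) (by norm_num) hm3.aestronglyMeasurable.restrict
      intro x hx
      exact habs2 _ _ 1 Cf (hRbd x hx) (hCf x)
    have i4 : IntervalIntegrable (fun c => ((γc c - c) * Q c) * fc c) volume 0 1 := by
      apply aux_bddII (C := ((Cγ + 1)*1) * Cf) (by norm_num) hm4.aestronglyMeasurable.restrict
      intro x hx
      have hxb : |x| ≤ 1 := by rw [abs_of_nonneg hx.1.le]; exact hx.2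
      have hd : |γc x - x| ≤ Cγ + 1 := le_trans (abs_sub _ _) (add_le_add (hCγ x) hxb)
      exact habs2 _ _ ((Cγ+1)*1) Cf (habs2 _ _ (Cγ+1) 1 hd (habs x)) (hCf x)
    have i5 : IntervalIntegrable (fun c => (γc c * Q c) * fc c) volume 0 1 := by
      apply aux_bddII (C := (Cγ*1) * Cf) (by norm_num) hm5.aestronglyMeasurable.restrict
      intro x _
      exact habs2 _ _ (Cγ*1) Cf (habs2 _ _ Cγ 1 (hCγ x) (habs x)) (hCf x)
    have iL : IntervalIntegrable (fun c => (Vc (Q c) - (c * Q c + R c)) * fc c) volume 0 1 := by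
      have hfun : (fun c => (Vc (Q c) - (c * Q c + R c)) * fc c)
          = fun c => (fun c => Vc (Q c) * fc c) c - ((fun c => (c * Q c) * fc c) c + (fun c => R c * fc c) c) := by
        funext c; simp only []; ring
      rw [hfun]
      exact i1.sub (i2.add i3)
    have iR : IntervalIntegrable (fun c => (Vc (Q c) - γc c * Q c) * fc c) volume 0 1 := by
      have hfun : (fun c => (Vc (Q c) - γc c * Q c) * fc c)
          = fun c => (fun c => Vc (Q c) * fc c) c - (fun c => (γc c * Q c) * fc c) c := by
        funext c; simp only []; ring
      rw [hfun]
      exact i1.sub i5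
    refine ⟨iL, iR, ?_⟩
    have eA : (∫ c in (0:ℝ)..1, (Vc (Q c) - (c * Q c + R c)) * fc c)
        = (∫ c in (0:ℝ)..1, Vc (Q c) * fc c)
          - ((∫ c in (0:ℝ)..1, (c * Q c) * fc c) + ∫ c in (0:ℝ)..1, R c * fc c) := by
      have hfun : (fun c => (Vc (Q c) - (c * Q c + R c)) * fc c)
          = fun c => (fun c => Vc (Q c) * fc c) c - ((fun c => (c * Q c) * fc c) c + (fun c => R c * fc c) c) := by
        funext c; simp only []; ring
      rw [hfun, intervalIntegral.integral_sub i1 (i2.add i3), intervalIntegral.integral_add i2 i3]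
    have eB : (∫ c in (0:ℝ)..1, R c * fc c) = ∫ x in (0:ℝ)..1, Q x * (∫ s in (0:ℝ)..x, fc s) :=
      aux_parts fc Q Cf hfc_cont hQm hCf habs
    have eC : (∫ x in (0:ℝ)..1, Q x * (∫ s in (0:ℝ)..x, fc s))
        = ∫ c in (0:ℝ)..1, ((γc c - c) * Q c) * fc c := by
      apply intervalIntegral.integral_congr
      intro x hx
      rw [uIcc_of_le (by norm_num : (0:ℝ) ≤ 1)] at hx
      have hFeq : (∫ s in (0:ℝ)..x, fc s) = F x := by
        rw [hF x]
        apply intervalIntegral.integral_congr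
        intro s hs
        rw [uIcc_of_le hx.1] at hs
        exact hfc_eq s ⟨hs.1, le_trans hs.2 hx.2⟩
      have hFx : F x = (γ x - x) * f x := by
        have h1 := hγ x hx
        have h2 := (hf_pos x hx).ne'
        rw [h1]
        field_simp
        ring
      simp only []
      rw [hFeq, hFx, hγc_eq x hx, hfc_eq x hx]
      ring
    have eD : (∫ c in (0:ℝ)..1, (γc c * Q c) * fc c)
        = (∫ c in (0:ℝ)..1, (c * Q c) * fc c) + ∫ c in (0:ℝ)..1, ((γc c - c) * Q c) * fc c := by
      rw [← intervalIntegral.integral_add i2 i4]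
      apply intervalIntegral.integral_congr
      intro x _
      simp only []
      ring
    have eE : (∫ c in (0:ℝ)..1, (Vc (Q c) - γc c * Q c) * fc c)
        = (∫ c in (0:ℝ)..1, Vc (Q c) * fc c) - ∫ c in (0:ℝ)..1, (γc c * Q c) * fc c := by
      have hfun : (fun c => (Vc (Q c) - γc c * Q c) * fc c)
          = fun c => (fun c => Vc (Q c) * fc c) c - (fun c => (γc c * Q c) * fc c) c := by
        funext c; simp only []; ring
      rw [hfun, intervalIntegral.integral_sub i1 i5]
    linarith
  obtain ⟨iLg, iRg, eQg⟩ := pack qg hqg_meas hqg_mem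
  obtain ⟨iLs, iRs, eQs⟩ := pack qsg hqsg_cont.measurable hqsg_mem
  -- M1 : rewrite the LHS and bound t from below
  have hM1eq : (∫ c in (0:ℝ)..1, (V (q c) - t c) * f c)
      = ∫ c in (0:ℝ)..1, (Vc (qg c) - t c) * fc c := by
    apply intervalIntegral.integral_congr
    intro c hc
    rw [uIcc_of_le (by norm_num : (0:ℝ) ≤ 1)] at hc
    show (V (q c) - t c) * f c = (Vc (qg c) - t c) * fc c
    rw [hqg_eq c hc, hVc_eq _ (hq01' c hc), hfc_eq c hc]
  have iLt : IntervalIntegrable (fun c => (Vc (qg c) - t c) * fc c) volume 0 1 := by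
    apply aux_bddII (C := (1 + |t 0|) * Cf) (by norm_num)
      (((((hVc_cont.measurable.comp hqg_meas).sub htmeas).mul hfc_cont.measurable)).aestronglyMeasurable.restrict)
    intro x hx
    have h1 : |Vc (qg x) - t x| ≤ 1 + |t 0| :=
      le_trans (abs_sub _ _) (add_le_add (hVc_bd _) (htbd x ⟨hx.1.le, hx.2⟩))
    exact habs2 _ _ (1 + |t 0|) Cf h1 (hCf x)
  have hM1 : (∫ c in (0:ℝ)..1, (Vc (qg c) - t c) * fc c)
      ≤ ∫ c in (0:ℝ)..1, (Vc (qg c) - (c * qg c + ∫ x in c..1, qg x)) * fc c := by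
    apply intervalIntegral.integral_mono_on (by norm_num) iLt iLg
    intro c hc
    have henvc := henv c hc
    have h2 : Vc (qg c) - t c ≤ Vc (qg c) - (c * qg c + ∫ x in c..1, qg x) := by
      rw [hqg_eq c hc]
      linarith
    exact mul_le_mul_of_nonneg_right h2 (hfc_nonneg c hc)
  -- M3 : pointwise maximization
  have hM3 : (∫ c in (0:ℝ)..1, (Vc (qg c) - γc c * qg c) * fc c)
      ≤ ∫ c in (0:ℝ)..1, (Vc (qsg c) - γc c * qsg c) * fc c := by
    apply intervalIntegral.integral_mono_on (by norm_num) iRg iRs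
    intro c hc
    have hp := hPW c hc (q c) (hq01' c hc)
    have h2 : Vc (qg c) - γc c * qg c ≤ Vc (qsg c) - γc c * qsg c := by
      rw [hqg_eq c hc, hqsg_eq c hc, hγc_eq c hc, hVc_eq _ (hq01' c hc), hVc_eq _ (hq01 c hc)]
      exact hp
    exact mul_le_mul_of_nonneg_right h2 (hfc_nonneg c hc)
  -- M5 : rewrite the RHS
  have hM5 : (∫ c in (0:ℝ)..1, (Vc (qsg c) - (c * qsg c + ∫ x in c..1, qsg x)) * fc c)
      = ∫ c in (0:ℝ)..1, (V (qstar c) - tstar c) * f c := by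
    apply intervalIntegral.integral_congr
    intro c hc
    rw [uIcc_of_le (by norm_num : (0:ℝ) ≤ 1)] at hc
    have hint : (∫ x in c..1, qsg x) = ∫ x in c..1, qstar x := by
      apply intervalIntegral.integral_congr
      intro x hx
      rw [uIcc_of_le hc.2] at hx
      exact hqsg_eq x ⟨le_trans hc.1 hx.1, hx.2⟩
    show (Vc (qsg c) - (c * qsg c + ∫ x in c..1, qsg x)) * fc c = (V (qstar c) - tstar c) * f c
    rw [hqsg_eq c hc, hint, hVc_eq _ (hq01 c hc), hfc_eq c hc, htstar c]
  rw [hM1eq, ← hM5]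
  linarith [hM1, eQg, hM3, eQs]
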